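/- arXiv:1804.05880 — 2 statements merged into one kernel-verified Lean document; each statement's English description precedes it below -/
import Mathlib

section
/- All supersets of a bound-variable set retain the bound effect property: let w : Set S → Set S be monotone and let B ⊆ V have the bound effect property for w, i.e., for all states ω and all X ⊆ S, ω ∈ w(X) iff ω ∈ w(X↓ω Bᶜ), where Bᶜ = V \ B. Then every W ⊆ V with W ⊇ B also has the bound effect property for w: for all states ω and all X ⊆ S, ω ∈ w(X) iff ω ∈ w(X↓ω Wᶜ). -/
/-- States map variables to reals. -/
def GState (V : Type*) := V → ℝ

/-- Two states agree on a set of variables `U`. -/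
def agreeOn {V : Type*} (ω ν : GState V) (U : Set V) : Prop :=
  ∀ x ∈ U, ω x = ν x

/-- Upward projection `X↑U`. -/
def upProj {V : Type*} (X : Set (GState V)) (U : Set V) : Set (GState V) :=
  {ν | ∃ ω ∈ X, agreeOn ω ν U}

/-- Downward projection `X↓ω U`. -/
def downProj {V : Type*} (X : Set (GState V)) (ω : GState V) (U : Set V) : Set (GState V) :=
  {ν ∈ X | agreeOn ω ν U}

/-- All supersets of a bound-variable set retain the bound effect property. -/
theorem bound_effect_superset {V : Type*} (w : Set (GState V) → Set (GState V))
    (hw : ∀ X Y : Set (GState V), X ⊆ Y → w X ⊆ w Y)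
    (B W : Set V)
    (hB : ∀ (ω : GState V) (X : Set (GState V)), ω ∈ w X ↔ ω ∈ w (downProj X ω Bᶜ))
    (hBW : B ⊆ W) :
    ∀ (ω : GState V) (X : Set (GState V)), ω ∈ w X ↔ ω ∈ w (downProj X ω Wᶜ) := by
  intro ω X
  have hsub : downProj X ω Bᶜ ⊆ downProj X ω Wᶜ := by
    intro ν ⟨hν, ha⟩
    exact ⟨hν, fun x hx => ha x (fun hxB => hx (hBW hxB))⟩
  constructor
  · intro h
    exact hw _ _ hsub ((hB ω X).mp h)
  · intro h
    exact hw _ _ (fun ν hν => hν.1) h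
end

section
/- The family of variable sets whose downward projection does not change winning regions is closed under binary union: let w : Set S → Set S, and suppose M₁ ⊆ V and M₂ ⊆ V each satisfy: for all states ω and all X ⊆ S, ω ∈ w(X) iff ω ∈ w(X↓ω Mᵢ). Then M₁ ∪ M₂ also satisfies: for all states ω and all X ⊆ S, ω ∈ w(X) iff ω ∈ w(X↓ω (M₁ ∪ M₂)). -/
lemma downProj_downProj {V : Type*} (X : Set (GState V)) (ω : GState V) (M₁ M₂ : Set V) :
    downProj (downProj X ω M₁) ω M₂ = downProj X ω (M₁ ∪ M₂) := by
  ext ν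
  simp only [downProj, Set.mem_setOf_eq, agreeOn]
  constructor
  · rintro ⟨⟨hX, h1⟩, h2⟩
    exact ⟨hX, fun x hx => hx.elim (h1 x) (h2 x)⟩
  · rintro ⟨hX, h⟩
    exact ⟨⟨hX, fun x hx => h x (Or.inl hx)⟩, fun x hx => h x (Or.inr hx)⟩

/-- The family of variable sets whose downward projection does not change
winning regions is closed under binary union. -/
theorem downProj_invariant_union {V : Type*} (w : Set (GState V) → Set (GState V))
    (M₁ M₂ : Set V)
    (h₁ : ∀ (ω : GState V) (X : Set (GState V)), ω ∈ w X ↔ ω ∈ w (downProj X ω M₁))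
    (h₂ : ∀ (ω : GState V) (X : Set (GState V)), ω ∈ w X ↔ ω ∈ w (downProj X ω M₂)) :
    ∀ (ω : GState V) (X : Set (GState V)),
      ω ∈ w X ↔ ω ∈ w (downProj X ω (M₁ ∪ M₂)) := by
  intro ω X
  rw [h₁ ω X, h₂ ω (downProj X ω M₁), downProj_downProj]
end
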